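/- Let Γ be a regular nicely distance-balanced graph with diameter d = 3 and γ(Γ) = 4. Then for every edge xy of Γ we have |D^2_3(x,y)| = |D^3_2(x,y)| and both sets D^2_3(x,y) and D^3_2(x,y) are nonempty. -/

import Mathlib

open SimpleGraph Finset

/-- `W_{u,v}`: the set of vertices strictly closer to `u` than to `v`. -/
noncomputable def ndbW {V : Type*} [Fintype V] (G : SimpleGraph V) (u v : V) : Finset V :=
  Finset.univ.filter fun x => G.dist x u < G.dist x v

/-- `D^i_j(u,v)`: the set of vertices at distance `i` from `u` and `j` from `v`. -/
noncomputable def ndbD {V : Type*} [Fintype V] (G : SimpleGraph V) (u v : V) (i j : ℕ) : Finset V :=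
  Finset.univ.filter fun x => G.dist x u = i ∧ G.dist x v = j

/-- `G` is nicely distance-balanced with constant `γ`. -/
def IsNDB {V : Type*} [Fintype V] (G : SimpleGraph V) (γ : ℕ) : Prop :=
  ∀ u v : V, G.Adj u v → (ndbW G u v).card = γ ∧ (ndbW G v u).card = γ

/-- `G` has diameter `d`. -/
def HasDiam {V : Type*} [Fintype V] (G : SimpleGraph V) (d : ℕ) : Prop :=
  (∀ u v : V, G.dist u v ≤ d) ∧ ∃ u v : V, G.dist u v = d

section NDBAux

variable {V : Type*} [Fintype V] [DecidableEq V] {G : SimpleGraph V}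

set_option linter.unusedSectionVars false

lemma mem_ndbW {u v p : V} : p ∈ ndbW G u v ↔ G.dist p u < G.dist p v := by
  simp [ndbW]

lemma mem_ndbD {u v p : V} {i j : ℕ} :
    p ∈ ndbD G u v i j ↔ G.dist p u = i ∧ G.dist p v = j := by
  simp [ndbD]

lemma ndbD32_eq (u v : V) : ndbD G u v 3 2 = ndbD G v u 2 3 := by
  ext p; simp [mem_ndbD, and_comm]

lemma ndbD11_comm (u v : V) : ndbD G u v 1 1 = ndbD G v u 1 1 := by
  ext p; simp [mem_ndbD, and_comm]

/-- Distance changes by at most one along an edge. -/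
lemma dist_le_adj (hconn : G.Connected) {u v : V} (h : G.Adj u v) (p : V) :
    G.dist p v ≤ G.dist p u + 1 := by
  have h1 := hconn.dist_triangle (u := p) (v := u) (w := v)
  rwa [dist_eq_one_iff_adj.mpr h] at h1

/-- A vertex adjacent to `v` at distance `n` from `u`, when `dist u v = n+1`. -/
lemma exists_adj_dist (hconn : G.Connected) {u v : V} {n : ℕ} (h : G.dist u v = n + 1) :
    ∃ w, G.Adj w v ∧ G.dist u w = n := by
  have h' : G.dist v u = n + 1 := by rwa [SimpleGraph.dist_comm] at h
  obtain ⟨p, hp⟩ := hconn.exists_walk_length_eq_dist v u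
  rw [h'] at hp
  cases p with
  | nil => simp at hp
  | @cons _ b _ hadj q =>
    refine ⟨b, hadj.symm, ?_⟩
    have hq : q.length = n := by simpa using hp
    have hle : G.dist b u ≤ n := hq ▸ SimpleGraph.dist_le q
    have hge : n + 1 ≤ 1 + G.dist b u := by
      have htr := hconn.dist_triangle (u := v) (v := b) (w := u)
      rw [dist_eq_one_iff_adj.mpr hadj] at htr
      omega
    rw [SimpleGraph.dist_comm]
    omega

/-- Partition of `W_{u,v}` for an edge `uv` in a graph of diameter at most 3. -/
lemma ndbW_parts (hconn : G.Connected) (hd : ∀ p q : V, G.dist p q ≤ 3)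
    {u v : V} (h : G.Adj u v) :
    ndbW G u v = insert u (ndbD G u v 1 2 ∪ ndbD G u v 2 3) := by
  ext p
  simp only [mem_ndbW, Finset.mem_insert, Finset.mem_union, mem_ndbD]
  constructor
  · intro hlt
    have h1 : G.dist p v ≤ G.dist p u + 1 := dist_le_adj hconn h p
    have h2 : G.dist p v ≤ 3 := hd p v
    have hv : G.dist p v = G.dist p u + 1 := by omega
    have hcase : G.dist p u = 0 ∨ G.dist p u = 1 ∨ G.dist p u = 2 := by omega
    rcases hcase with h0 | h0 | h0
    · exact Or.inl (hconn.dist_eq_zero_iff.mp h0)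
    · exact Or.inr (Or.inl ⟨h0, by omega⟩)
    · exact Or.inr (Or.inr ⟨h0, by omega⟩)
  · rintro (rfl | ⟨h1, h2⟩ | ⟨h1, h2⟩)
    · rw [SimpleGraph.dist_self, dist_eq_one_iff_adj.mpr h]; omega
    · omega
    · omega

lemma ndbW_card (hconn : G.Connected) (hd : ∀ p q : V, G.dist p q ≤ 3)
    (hndb : IsNDB G 4) {u v : V} (h : G.Adj u v) :
    4 = 1 + (ndbD G u v 1 2).card + (ndbD G u v 2 3).card := by
  classical
  have hW := (hndb u v h).1
  rw [ndbW_parts hconn hd h] at hW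
  rw [Finset.card_insert_of_notMem, Finset.card_union_of_disjoint] at hW
  · omega
  · rw [Finset.disjoint_left]
    intro a ha hb
    rw [mem_ndbD] at ha hb
    omega
  · simp [mem_ndbD, SimpleGraph.dist_self]

/-- Partition of the neighbourhood of `u` for an edge `uv`. -/
lemma nbhd_parts (hconn : G.Connected) [DecidableRel G.Adj] {u v : V} (h : G.Adj u v) :
    G.neighborFinset u = insert v (ndbD G u v 1 1 ∪ ndbD G u v 1 2) := by
  ext p
  simp only [mem_neighborFinset, Finset.mem_insert, Finset.mem_union, mem_ndbD]
  constructor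
  · intro hadj
    have h1 : G.dist p u = 1 := dist_eq_one_iff_adj.mpr hadj.symm
    have h2 : G.dist p v ≤ 2 := by
      have := dist_le_adj hconn h p; omega
    have hcase : G.dist p v = 0 ∨ G.dist p v = 1 ∨ G.dist p v = 2 := by omega
    rcases hcase with h0 | h0 | h0
    · exact Or.inl (hconn.dist_eq_zero_iff.mp h0)
    · exact Or.inr (Or.inl ⟨h1, h0⟩)
    · exact Or.inr (Or.inr ⟨h1, h0⟩)
  · rintro (rfl | ⟨h1, _⟩ | ⟨h1, _⟩)
    · exact h
    · exact (dist_eq_one_iff_adj.mp h1).symm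
    · exact (dist_eq_one_iff_adj.mp h1).symm

lemma deg_card (hconn : G.Connected) [DecidableRel G.Adj] {k : ℕ}
    (hreg : G.IsRegularOfDegree k) {u v : V} (h : G.Adj u v) :
    k = 1 + (ndbD G u v 1 1).card + (ndbD G u v 1 2).card := by
  classical
  have hdeg : (G.neighborFinset u).card = k := by
    rw [card_neighborFinset_eq_degree]; exact hreg u
  rw [nbhd_parts hconn h] at hdeg
  rw [Finset.card_insert_of_notMem, Finset.card_union_of_disjoint] at hdeg
  · omega
  · rw [Finset.disjoint_left]
    intro a ha hb
    rw [mem_ndbD] at ha hb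
    omega
  · simp [mem_ndbD, SimpleGraph.dist_self]

/-- The key symmetry: `|D^2_3(u,v)| = |D^2_3(v,u)|` for every edge of a regular NDB
graph with `γ = 4` and diameter at most 3. -/
lemma ndbD23_card_comm (hconn : G.Connected) [DecidableRel G.Adj]
    (hd : ∀ p q : V, G.dist p q ≤ 3) (hndb : IsNDB G 4) {k : ℕ}
    (hreg : G.IsRegularOfDegree k) {u v : V} (h : G.Adj u v) :
    (ndbD G u v 2 3).card = (ndbD G v u 2 3).card := by
  have h1 := ndbW_card hconn hd hndb h
  have h2 := ndbW_card hconn hd hndb h.symm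
  have h3 := deg_card hconn hreg h
  have h4 := deg_card hconn hreg h.symm
  rw [ndbD11_comm] at h4
  omega

lemma five_le_card {s : Finset V} {a b c d e : V} (ha : a ∈ s) (hb : b ∈ s) (hc : c ∈ s)
    (hd : d ∈ s) (he : e ∈ s) (h1 : a ≠ b) (h2 : a ≠ c) (h3 : a ≠ d) (h4 : a ≠ e)
    (h5 : b ≠ c) (h6 : b ≠ d) (h7 : b ≠ e) (h8 : c ≠ d) (h9 : c ≠ e) (h10 : d ≠ e) :
    5 ≤ s.card := by
  classical
  have hsub : ({a, b, c, d, e} : Finset V) ⊆ s := by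
    intro p hp
    simp only [Finset.mem_insert, Finset.mem_singleton] at hp
    rcases hp with rfl | rfl | rfl | rfl | rfl <;> assumption
  have hcard : ({a, b, c, d, e} : Finset V).card = 5 := by
    rw [show ({a, b, c, d, e} : Finset V)
        = insert a (insert b (insert c (insert d {e}))) from rfl,
      Finset.card_insert_of_notMem (by simp [h1, h2, h3, h4]),
      Finset.card_insert_of_notMem (by simp [h5, h6, h7]),
      Finset.card_insert_of_notMem (by simp [h8, h9]),
      Finset.card_insert_of_notMem (by simp [h10]),
      Finset.card_singleton]
  calc 5 = ({a, b, c, d, e} : Finset V).card := hcard.symm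
    _ ≤ s.card := Finset.card_le_card hsub

lemma six_le_card {s : Finset V} {a b c d e f : V} (ha : a ∈ s) (hb : b ∈ s) (hc : c ∈ s)
    (hd : d ∈ s) (he : e ∈ s) (hf : f ∈ s)
    (h1 : a ≠ b) (h2 : a ≠ c) (h3 : a ≠ d) (h4 : a ≠ e) (h5 : a ≠ f)
    (h6 : b ≠ c) (h7 : b ≠ d) (h8 : b ≠ e) (h9 : b ≠ f)
    (h10 : c ≠ d) (h11 : c ≠ e) (h12 : c ≠ f)
    (h13 : d ≠ e) (h14 : d ≠ f) (h15 : e ≠ f) :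
    6 ≤ s.card := by
  classical
  have hsub : ({a, b, c, d, e, f} : Finset V) ⊆ s := by
    intro p hp
    simp only [Finset.mem_insert, Finset.mem_singleton] at hp
    rcases hp with rfl | rfl | rfl | rfl | rfl | rfl <;> assumption
  have hcard : ({a, b, c, d, e, f} : Finset V).card = 6 := by
    rw [show ({a, b, c, d, e, f} : Finset V)
        = insert a (insert b (insert c (insert d (insert e {f})))) from rfl,
      Finset.card_insert_of_notMem (by simp [h1, h2, h3, h4, h5]),
      Finset.card_insert_of_notMem (by simp [h6, h7, h8, h9]),
      Finset.card_insert_of_notMem (by simp [h10, h11, h12]),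
      Finset.card_insert_of_notMem (by simp [h13, h14]),
      Finset.card_insert_of_notMem (by simp [h15]),
      Finset.card_singleton]
  calc 6 = ({a, b, c, d, e, f} : Finset V).card := hcard.symm
    _ ≤ s.card := Finset.card_le_card hsub

/-- In a regular NDB graph with `γ = 4` and diameter `3`, every vertex has
eccentricity exactly `3`. -/
lemma ecc_three (hconn : G.Connected) [DecidableRel G.Adj] {k : ℕ}
    (hreg : G.IsRegularOfDegree k) (hdiam : HasDiam G 3) (hndb : IsNDB G 4) (x : V) :
    ∃ z : V, G.dist z x = 3 := by
  by_contra hno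
  push_neg at hno
  have hP : ∀ p, G.dist p x ≤ 2 := by
    intro p
    have h1 := hdiam.1 p x
    have h2 := hno p
    omega
  -- propagation of eccentricity ≤ 2 along edges
  have step : ∀ a b : V, G.Adj a b → (∀ p, G.dist p a ≤ 2) → (∀ p, G.dist p b ≤ 2) := by
    intro a b hab ha
    have hW1 := ndbW_card hconn hdiam.1 hndb hab.symm
    have h23empty : (ndbD G b a 2 3).card = 0 := by
      rw [Finset.card_eq_zero]
      ext p
      simp only [mem_ndbD, Finset.notMem_empty, iff_false, not_and]
      intro _
      have := ha p; omega
    have h12ba : (ndbD G b a 1 2).card = 3 := by omega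
    have hdeg1 := deg_card hconn hreg hab.symm
    have hdeg2 := deg_card hconn hreg hab
    rw [ndbD11_comm] at hdeg2
    have h12ab : (ndbD G a b 1 2).card = 3 := by omega
    have hW2 := ndbW_card hconn hdiam.1 hndb hab
    have h23ab : (ndbD G a b 2 3).card = 0 := by omega
    have h23abe : ndbD G a b 2 3 = ∅ := Finset.card_eq_zero.mp h23ab
    intro p
    by_contra hp3
    have hd3 : G.dist p b = 3 := by
      have := hdiam.1 p b; omega
    have hda : G.dist p a = 2 := by
      have h1 := ha p
      have h2 := dist_le_adj hconn hab.symm p -- dist p a ≤ dist p b + 1? no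
      have h3 := dist_le_adj hconn hab p
      omega
    have : p ∈ ndbD G a b 2 3 := mem_ndbD.mpr ⟨hda, hd3⟩
    rw [h23abe] at this
    exact absurd this (Finset.notMem_empty p)
  have reach : ∀ (a b : V), G.Walk a b → (∀ p, G.dist p a ≤ 2) → (∀ p, G.dist p b ≤ 2) := by
    intro a b w
    induction w with
    | nil => exact id
    | cons hadj q ih => intro ha; exact ih (step _ _ hadj ha)
  obtain ⟨u0, v0, h30⟩ := hdiam.2
  have hv0 : ∀ p, G.dist p v0 ≤ 2 := (hconn x v0).elim fun w => reach x v0 w hP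
  have := hv0 u0
  omega

end NDBAux

/-- In a regular NDB graph with diameter `3` and `γ = 4`, for every
edge `xy` we have `|D^2_3(x,y)| = |D^3_2(x,y)|` and both sets are nonempty. -/
theorem stmt_7 {V : Type*} [Fintype V] (G : SimpleGraph V) [DecidableRel G.Adj]
    (hconn : G.Connected) (k : ℕ) (hreg : G.IsRegularOfDegree k)
    (hdiam : HasDiam G 3) (hndb : IsNDB G 4)
    (x y : V) (hxy : G.Adj x y) :
    (ndbD G x y 2 3).card = (ndbD G x y 3 2).card ∧
    (ndbD G x y 2 3).Nonempty ∧ (ndbD G x y 3 2).Nonempty := by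
  classical
  have hd3 := hdiam.1
  have hcardeq : (ndbD G x y 2 3).card = (ndbD G x y 3 2).card := by
    rw [ndbD32_eq]
    exact ndbD23_card_comm hconn hd3 hndb hreg hxy
  have hne : (ndbD G x y 2 3).Nonempty := by
    rw [Finset.nonempty_iff_ne_empty]
    intro h23
    have h32 : ndbD G x y 3 2 = ∅ := by
      rw [← Finset.card_eq_zero, ← hcardeq, h23, Finset.card_empty]
    have hW_xy := ndbW_card hconn hd3 hndb hxy
    have h23c : (ndbD G x y 2 3).card = 0 := by rw [h23]; simp
    have h12c : (ndbD G x y 1 2).card = 3 := by omega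
    have hdeg_xy := deg_card hconn hreg hxy
    -- a vertex z at distance 3 from both x and y
    obtain ⟨z, hdzx⟩ := ecc_three hconn hreg hdiam hndb x
    have hdzy : G.dist z y = 3 := by
      have h1 : G.dist z y ≤ 3 := hd3 z y
      have h2 : G.dist z x ≤ G.dist z y + 1 := dist_le_adj hconn hxy.symm z
      have h3 : G.dist z y ≠ 2 := by
        intro h2'
        have hmm : z ∈ ndbD G x y 3 2 := mem_ndbD.mpr ⟨hdzx, h2'⟩
        rw [h32] at hmm
        exact absurd hmm (Finset.notMem_empty z)
      omega
    -- w : neighbour of z at distance 2 from x (and from y)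
    have hdxz : G.dist x z = 2 + 1 := by rw [SimpleGraph.dist_comm]; exact hdzx
    obtain ⟨w, hwz, hdxw⟩ := exists_adj_dist hconn hdxz
    have hdwx : G.dist w x = 2 := by rw [SimpleGraph.dist_comm]; exact hdxw
    have hdwz : G.dist w z = 1 := dist_eq_one_iff_adj.mpr hwz
    have hdzw : G.dist z w = 1 := dist_eq_one_iff_adj.mpr hwz.symm
    have hdwy : G.dist w y = 2 := by
      have h1 : G.dist w y ≤ 3 := hd3 w y
      have h2 : G.dist z y ≤ G.dist z w + G.dist w y := hconn.dist_triangle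
      have h3 : G.dist w y ≠ 3 := by
        intro h3'
        have hmm : w ∈ ndbD G x y 2 3 := mem_ndbD.mpr ⟨hdwx, h3'⟩
        rw [h23] at hmm
        exact absurd hmm (Finset.notMem_empty w)
      omega
    -- c : common neighbour of x and w
    obtain ⟨c, hcw, hdxc⟩ := exists_adj_dist hconn (show G.dist x w = 1 + 1 from hdxw)
    have hdcx : G.dist c x = 1 := by rw [SimpleGraph.dist_comm]; exact hdxc
    have hxc : G.Adj x c := dist_eq_one_iff_adj.mp hdxc
    have hdcw : G.dist c w = 1 := dist_eq_one_iff_adj.mpr hcw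
    have hdcz : G.dist c z = 2 := by
      have h1 : G.dist c z ≤ G.dist c w + G.dist w z := hconn.dist_triangle
      have h2 : G.dist z x ≤ G.dist z c + G.dist c x := hconn.dist_triangle
      have h3 : G.dist z c = G.dist c z := SimpleGraph.dist_comm
      omega
    -- c' : common neighbour of y and w
    obtain ⟨c', hc'w, hdyc'⟩ := exists_adj_dist hconn
      (show G.dist y w = 1 + 1 by rw [SimpleGraph.dist_comm]; exact hdwy)
    have hdc'y : G.dist c' y = 1 := by rw [SimpleGraph.dist_comm]; exact hdyc'
    have hdc'w : G.dist c' w = 1 := dist_eq_one_iff_adj.mpr hc'w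
    have hdc'z : G.dist c' z = 2 := by
      have h1 : G.dist c' z ≤ G.dist c' w + G.dist w z := hconn.dist_triangle
      have h2 : G.dist z y ≤ G.dist z c' + G.dist c' y := hconn.dist_triangle
      have h3 : G.dist z c' = G.dist c' z := SimpleGraph.dist_comm
      omega
    -- memberships in W(w,z)
    have hWwz : (ndbW G w z).card = 4 := (hndb w z hwz).1
    have hdyz3 : G.dist y z = 3 := by rw [SimpleGraph.dist_comm]; exact hdzy
    have hdxz3 : G.dist x z = 3 := hdxz
    have hdyw2 : G.dist y w = 2 := by rw [SimpleGraph.dist_comm]; exact hdwy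
    have hmemw : w ∈ ndbW G w z := mem_ndbW.mpr (by rw [SimpleGraph.dist_self, hdwz]; omega)
    have hmemx : x ∈ ndbW G w z := mem_ndbW.mpr (by rw [hdxw, hdxz3]; omega)
    have hmemy : y ∈ ndbW G w z := mem_ndbW.mpr (by rw [hdyw2, hdyz3]; omega)
    have hmemc : c ∈ ndbW G w z := mem_ndbW.mpr (by rw [hdcw, hdcz]; omega)
    -- distinctness facts reused below
    have hwnx : w ≠ x := by intro h; rw [h] at hdwz; omega
    have hwny : w ≠ y := by intro h; rw [h] at hdwz; omega
    have hwnc : w ≠ c := hcw.ne.symm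
    have hxny : x ≠ y := hxy.ne
    have hxnc : x ≠ c := by intro h; rw [h] at hdxz3; omega
    have hync : y ≠ c := by intro h; rw [h] at hdyz3; omega
    -- c' = c
    have hcc' : c' = c := by
      by_contra hne'
      have hmemc' : c' ∈ ndbW G w z := mem_ndbW.mpr (by rw [hdc'w, hdc'z]; omega)
      have hwnc' : w ≠ c' := hc'w.ne.symm
      have hxnc' : x ≠ c' := by intro h; rw [h] at hdxz3; omega
      have hync' : y ≠ c' := by intro h; rw [h] at hdyz3; omega
      have h5 := five_le_card hmemw hmemx hmemy hmemc hmemc'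
        hwnx hwny hwnc hwnc' hxny hxnc hxnc' hync hync' (fun h => hne' h.symm)
      omega
    rw [hcc'] at hdc'y hdc'w hdc'z hc'w
    -- now c is adjacent to x, y and w, with dist c z = 2
    have hcy : G.Adj c y := dist_eq_one_iff_adj.mp hdc'y
    have hdyc1 : G.dist y c = 1 := by rw [SimpleGraph.dist_comm]; exact hdc'y
    have hcD11 : c ∈ ndbD G x y 1 1 := mem_ndbD.mpr ⟨hdcx, hdc'y⟩
    have hk5 : 5 ≤ k := by
      have hpos := Finset.card_pos.mpr ⟨c, hcD11⟩
      omega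
    -- every neighbour of w is z, c, or a neighbour of z
    have hNw : ∀ n, G.Adj n w → n = z ∨ n = c ∨ G.Adj n z := by
      intro n hnw
      have hnw1 : G.dist n w = 1 := dist_eq_one_iff_adj.mpr hnw
      have h1 : G.dist n z ≤ 2 := by
        have h2 := dist_le_adj hconn hwz n
        omega
      have hcase : G.dist n z = 0 ∨ G.dist n z = 1 ∨ G.dist n z = 2 := by omega
      rcases hcase with h0 | h0 | h0
      · exact Or.inl (hconn.dist_eq_zero_iff.mp h0)
      · exact Or.inr (Or.inr (dist_eq_one_iff_adj.mp h0))
      · right; left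
        by_contra hnc
        have hmemn : n ∈ ndbW G w z := mem_ndbW.mpr (by rw [hnw1, h0]; omega)
        have hwnn : w ≠ n := hnw.ne.symm
        have hxnn : x ≠ n := by intro h; rw [← h] at h0; omega
        have hynn : y ≠ n := by intro h; rw [← h] at h0; omega
        have hcnn : c ≠ n := fun h => hnc h.symm
        have h5 := five_le_card hmemw hmemx hmemy hmemc hmemn
          hwnx hwny hwnc hwnn hxny hxnc hxnn hync hynn hcnn
        omega
    -- t : common neighbour of w, z and c
    have hwcAdj : G.Adj w c := hcw.symm
    have hdwc : G.dist w c = 1 := dist_eq_one_iff_adj.mpr hwcAdj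
    have hdzc2 : G.dist z c = 2 := by rw [SimpleGraph.dist_comm]; exact hdcz
    obtain ⟨t, htw, htz, htc⟩ : ∃ t, G.Adj t w ∧ G.Adj t z ∧ G.Adj t c := by
      by_contra hno'
      push_neg at hno'
      set F := ((G.neighborFinset w).erase z).erase c with hF
      have hzmem : z ∈ G.neighborFinset w := by
        rw [mem_neighborFinset]; exact hwz
      have hcznz : c ≠ z := by intro h; rw [h, SimpleGraph.dist_self] at hdcz; omega
      have hcmemv : c ∈ (G.neighborFinset w).erase z := by
        rw [Finset.mem_erase, mem_neighborFinset]
        exact ⟨hcznz, hwcAdj⟩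
      have hcardF : F.card + 2 = k := by
        have h1 : ((G.neighborFinset w).erase z).card = k - 1 := by
          rw [Finset.card_erase_of_mem hzmem, card_neighborFinset_eq_degree, hreg w]
        have h2 : F.card = k - 1 - 1 := by
          rw [hF, Finset.card_erase_of_mem hcmemv, h1]
        omega
      have hsub : insert w (insert z F) ⊆ ndbW G w c := by
        intro p hp
        rw [Finset.mem_insert, Finset.mem_insert] at hp
        rcases hp with rfl | rfl | hp
        · exact mem_ndbW.mpr (by rw [SimpleGraph.dist_self, hdwc]; omega)
        · exact mem_ndbW.mpr (by rw [hdzw, hdzc2]; omega)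
        · have hpc : p ≠ c := Finset.ne_of_mem_erase hp
          have hp' := Finset.mem_of_mem_erase hp
          have hpz : p ≠ z := Finset.ne_of_mem_erase hp'
          have hpw : G.Adj w p := by
            rw [← mem_neighborFinset]; exact Finset.mem_of_mem_erase hp'
          have hadjz : G.Adj p z := by
            rcases hNw p hpw.symm with h0 | h0 | h0
            · exact absurd h0 hpz
            · exact absurd h0 hpc
            · exact h0
          have hnotc : ¬ G.Adj p c := fun hh => hno' p hpw.symm hadjz hh
          have hdpw : G.dist p w = 1 := dist_eq_one_iff_adj.mpr hpw.symm
          have hdpc : G.dist p c = 2 := by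
            have hle : G.dist p c ≤ 2 := by
              have h9 := dist_le_adj hconn hwcAdj p
              omega
            have h0' : G.dist p c ≠ 0 := fun h0 => hpc (hconn.dist_eq_zero_iff.mp h0)
            have h1' : G.dist p c ≠ 1 := fun h1 => hnotc (dist_eq_one_iff_adj.mp h1)
            omega
          exact mem_ndbW.mpr (by rw [hdpw, hdpc]; omega)
      have hcardle := Finset.card_le_card hsub
      have hWwc : (ndbW G w c).card = 4 := (hndb w c hwcAdj).1
      have hwmemins : w ∉ insert z F := by
        rw [Finset.mem_insert]
        push_neg
        refine ⟨hwz.ne, fun h => ?_⟩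
        have hh := Finset.mem_of_mem_erase (Finset.mem_of_mem_erase h)
        rw [mem_neighborFinset] at hh
        exact G.loopless.irrefl w hh
      have hzF : z ∉ F := fun h => (Finset.ne_of_mem_erase (Finset.mem_of_mem_erase h)) rfl
      have hcardins : (insert w (insert z F)).card = F.card + 2 := by
        rw [Finset.card_insert_of_notMem hwmemins, Finset.card_insert_of_notMem hzF]
      omega
    have hdtz1 : G.dist z t = 1 := dist_eq_one_iff_adj.mpr htz.symm
    have hdtx : 2 ≤ G.dist t x := by
      have h1 : G.dist z x ≤ G.dist z t + G.dist t x := hconn.dist_triangle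
      omega
    have hdty : 2 ≤ G.dist t y := by
      have h1 : G.dist z y ≤ G.dist z t + G.dist t y := hconn.dist_triangle
      omega
    -- the set S of common neighbours of c and {x or y}, other than x, y
    have hWcw : (ndbW G c w).card = 4 := (hndb c w hcw).1
    set S := Finset.univ.filter
      (fun n => G.dist n c = 1 ∧ (G.dist n x = 1 ∨ G.dist n y = 1) ∧ n ≠ x ∧ n ≠ y) with hS
    have hkey : ∀ n ∈ S, n ≠ c ∧ G.dist n w = 2 := by
      intro n hn
      rw [hS, Finset.mem_filter] at hn
      obtain ⟨-, hdnc, hnxy, hnx, hny⟩ := hn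
      have hnc : n ≠ c := by intro h; rw [h, SimpleGraph.dist_self] at hdnc; omega
      refine ⟨hnc, ?_⟩
      have hle : G.dist n w ≤ 2 := by
        have h9 := dist_le_adj hconn hcw n
        omega
      have hnw : n ≠ w := by
        rcases hnxy with h1 | h1 <;>
          { intro h; rw [h] at h1; omega }
      have hnadjw : ¬ G.Adj n w := by
        intro hadj
        rcases hNw n hadj with h0 | h0 | h0
        · rcases hnxy with h1 | h1
          · rw [h0] at h1; omega
          · rw [h0] at h1; omega
        · exact hnc h0
        · have hzn : G.dist z n = 1 := dist_eq_one_iff_adj.mpr h0.symm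
          rcases hnxy with h1 | h1
          · have h2 : G.dist z x ≤ G.dist z n + G.dist n x := hconn.dist_triangle
            omega
          · have h2 : G.dist z y ≤ G.dist z n + G.dist n y := hconn.dist_triangle
            omega
      have h0' : G.dist n w ≠ 0 := fun h0 => hnw (hconn.dist_eq_zero_iff.mp h0)
      have h1' : G.dist n w ≠ 1 := fun h1 => hnadjw (dist_eq_one_iff_adj.mp h1)
      omega
    have hSone : S.card ≤ 1 := by
      rw [Finset.card_le_one]
      intro a ha b hb
      by_contra hab
      obtain ⟨hac, haw⟩ := hkey a ha
      obtain ⟨hbc, hbw⟩ := hkey b hb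
      rw [hS, Finset.mem_filter] at ha hb
      obtain ⟨-, hdac, -, hax, hay⟩ := ha
      obtain ⟨-, hdbc, -, hbx, hby⟩ := hb
      have m1 : c ∈ ndbW G c w := mem_ndbW.mpr (by rw [SimpleGraph.dist_self, hdcw]; omega)
      have m2 : x ∈ ndbW G c w := mem_ndbW.mpr (by rw [hdxc, hdxw]; omega)
      have m3 : y ∈ ndbW G c w := mem_ndbW.mpr (by rw [hdyc1, hdyw2]; omega)
      have m4 : a ∈ ndbW G c w := mem_ndbW.mpr (by rw [hdac, haw]; omega)
      have m5 : b ∈ ndbW G c w := mem_ndbW.mpr (by rw [hdbc, hbw]; omega)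
      have h5 := five_le_card m1 m2 m3 m4 m5
        (fun h => hxnc h.symm) (fun h => hync h.symm) (fun h => hac h.symm)
        (fun h => hbc h.symm) hxny (fun h => hax h.symm) (fun h => hbx h.symm)
        (fun h => hay h.symm) (fun h => hby h.symm) hab
      omega
    -- edge (x, c) : at least k - 3 common neighbours
    have hW_xc := ndbW_card hconn hd3 hndb hxc
    have hswap_xc := ndbD23_card_comm hconn hd3 hndb hreg hxc
    have h23xc : 1 ≤ (ndbD G x c 2 3).card := by
      rw [hswap_xc, ← ndbD32_eq]
      exact Finset.card_pos.mpr ⟨z, mem_ndbD.mpr ⟨hdzx, hdzc2⟩⟩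
    have hdeg_xc := deg_card hconn hreg hxc
    have hymem11 : y ∈ ndbD G x c 1 1 :=
      mem_ndbD.mpr ⟨dist_eq_one_iff_adj.mpr hxy.symm, hdyc1⟩
    have hsubx : (ndbD G x c 1 1).erase y ⊆ S := by
      intro n hn
      have hny := Finset.ne_of_mem_erase hn
      have hn' := mem_ndbD.mp (Finset.mem_of_mem_erase hn)
      have hnx : n ≠ x := by
        intro h; rw [h, SimpleGraph.dist_self] at hn'; omega
      rw [hS, Finset.mem_filter]
      exact ⟨Finset.mem_univ n, hn'.2, Or.inl hn'.1, hnx, hny⟩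
    have hcard11x : (ndbD G x c 1 1).card ≤ 2 := by
      have h1 := Finset.card_le_card hsubx
      have h2 := Finset.card_erase_of_mem hymem11
      omega
    have hk5' : k = 5 := by omega
    have hcard11xeq : (ndbD G x c 1 1).card = 2 := by omega
    obtain ⟨e, he⟩ : ((ndbD G x c 1 1).erase y).Nonempty := by
      rw [← Finset.card_pos, Finset.card_erase_of_mem hymem11]
      omega
    have hey : e ≠ y := Finset.ne_of_mem_erase he
    have he' := mem_ndbD.mp (Finset.mem_of_mem_erase he)
    have hdex : G.dist e x = 1 := he'.1
    have hdec : G.dist e c = 1 := he'.2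
    -- edge (y, c)
    have hyc : G.Adj y c := hcy.symm
    have hW_yc := ndbW_card hconn hd3 hndb hyc
    have hswap_yc := ndbD23_card_comm hconn hd3 hndb hreg hyc
    have h23yc : 1 ≤ (ndbD G y c 2 3).card := by
      rw [hswap_yc, ← ndbD32_eq]
      exact Finset.card_pos.mpr ⟨z, mem_ndbD.mpr ⟨hdzy, hdzc2⟩⟩
    have hdeg_yc := deg_card hconn hreg hyc
    have hxmem11 : x ∈ ndbD G y c 1 1 :=
      mem_ndbD.mpr ⟨dist_eq_one_iff_adj.mpr hxy, hdxc⟩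
    have hsuby : (ndbD G y c 1 1).erase x ⊆ S := by
      intro n hn
      have hnx := Finset.ne_of_mem_erase hn
      have hn' := mem_ndbD.mp (Finset.mem_of_mem_erase hn)
      have hny : n ≠ y := by
        intro h; rw [h, SimpleGraph.dist_self] at hn'; omega
      rw [hS, Finset.mem_filter]
      exact ⟨Finset.mem_univ n, hn'.2, Or.inr hn'.1, hnx, hny⟩
    have hcard11y : (ndbD G y c 1 1).card ≤ 2 := by
      have h1 := Finset.card_le_card hsuby
      have h2 := Finset.card_erase_of_mem hxmem11
      omega
    obtain ⟨e', he2⟩ : ((ndbD G y c 1 1).erase x).Nonempty := by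
      rw [← Finset.card_pos, Finset.card_erase_of_mem hxmem11]
      omega
    have he'x : e' ≠ x := Finset.ne_of_mem_erase he2
    have he2' := mem_ndbD.mp (Finset.mem_of_mem_erase he2)
    have hde'y : G.dist e' y = 1 := he2'.1
    have hde'c : G.dist e' c = 1 := he2'.2
    -- final contradiction
    by_cases hee : e = e'
    · have heD11 : e ∈ ndbD G x y 1 1 := mem_ndbD.mpr ⟨hdex, by rw [hee]; exact hde'y⟩
      have hcardxy1 : (ndbD G x y 1 1).card = 1 := by omega
      have hec : e = c := Finset.card_le_one.mp (le_of_eq hcardxy1) e heD11 c hcD11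
      rw [hec, SimpleGraph.dist_self] at hdec
      omega
    · have hNc : (G.neighborFinset c).card = k := by
        rw [card_neighborFinset_eq_degree]; exact hreg c
      have n1 : x ∈ G.neighborFinset c := by rw [mem_neighborFinset]; exact hxc.symm
      have n2 : y ∈ G.neighborFinset c := by rw [mem_neighborFinset]; exact hcy
      have n3 : w ∈ G.neighborFinset c := by rw [mem_neighborFinset]; exact hcw
      have n4 : t ∈ G.neighborFinset c := by rw [mem_neighborFinset]; exact htc.symm
      have n5 : e ∈ G.neighborFinset c := by
        rw [mem_neighborFinset]; exact (dist_eq_one_iff_adj.mp hdec).symm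
      have n6 : e' ∈ G.neighborFinset c := by
        rw [mem_neighborFinset]; exact (dist_eq_one_iff_adj.mp hde'c).symm
      have d2 : x ≠ w := fun h => by rw [← h, SimpleGraph.dist_self] at hdwx; omega
      have d3 : x ≠ t := fun h => by rw [← h, SimpleGraph.dist_self] at hdtx; omega
      have d4 : x ≠ e := fun h => by rw [← h, SimpleGraph.dist_self] at hdex; omega
      have d5 : x ≠ e' := fun h => he'x h.symm
      have d6 : y ≠ w := fun h => by rw [← h, SimpleGraph.dist_self] at hdwy; omega
      have d7 : y ≠ t := fun h => by rw [← h, SimpleGraph.dist_self] at hdty; omega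
      have d8 : y ≠ e := fun h => hey h.symm
      have d9 : y ≠ e' := fun h => by rw [← h, SimpleGraph.dist_self] at hde'y; omega
      have d10 : w ≠ t := fun h => htw.ne h.symm
      have d11 : w ≠ e := fun h => by rw [h] at hdwx; omega
      have d12 : w ≠ e' := fun h => by rw [h] at hdwy; omega
      have d13 : t ≠ e := fun h => by rw [h] at hdtx; omega
      have d14 : t ≠ e' := fun h => by rw [h] at hdty; omega
      have h6 := six_le_card n1 n2 n3 n4 n5 n6
        hxny d2 d3 d4 d5 d6 d7 d8 d9 d10 d11 d12 d13 d14 hee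
      omega
  have hne32 : (ndbD G x y 3 2).Nonempty := by
    rw [← Finset.card_pos, ← hcardeq]
    exact Finset.card_pos.mpr hne
  exact ⟨hcardeq, hne, hne32⟩
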